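/- For all real r ≥ 1, the function f(x) = ln(2x)·2x² − ln(1+x)·(1+x)² satisfies f(2^r) > 0; equivalently, ln(2^{r+1})·2^{2(r+1)-1} > ln(1+2^r)·(1+2^r)². -/

import Mathlib

lemma key_aux (x : ℝ) (hx : 2 ≤ x) :
    0 < Real.log (2 * x) * (2 * x ^ 2) - Real.log (1 + x) * (1 + x) ^ 2 := by
  have h1x : (0:ℝ) < 1 + x := by linarith
  have h2x : (0:ℝ) < 2 * x := by linarith
  have hq : Real.log (2 * x / (1 + x)) = Real.log (2 * x) - Real.log (1 + x) :=
    Real.log_div (ne_of_gt h2x) (ne_of_gt h1x)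
  have hlogpos : 0 < Real.log (2 * x / (1 + x)) :=
    Real.log_pos (by rw [lt_div_iff₀ h1x]; linarith)
  have hlog2x : 0 < Real.log (2 * x) := Real.log_pos (by linarith)
  have key : Real.log (2 * x) * (2 * x ^ 2) - Real.log (1 + x) * (1 + x) ^ 2
      = Real.log (2 * x) * (2 * x ^ 2 - (1 + x) ^ 2)
        + Real.log (2 * x / (1 + x)) * (1 + x) ^ 2 := by
    rw [hq]; ring
  rw [key]
  by_cases h : (1 + x) ^ 2 ≤ 2 * x ^ 2
  · have t1 : 0 ≤ Real.log (2 * x) * (2 * x ^ 2 - (1 + x) ^ 2) :=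
      mul_nonneg hlog2x.le (by linarith)
    have t2 : 0 < Real.log (2 * x / (1 + x)) * (1 + x) ^ 2 :=
      mul_pos hlogpos (by positivity)
    linarith
  · push_neg at h
    have hxu : x ≤ 5 / 2 := by nlinarith
    have b1 : Real.log (2 * x) ≤ Real.log 5 := by
      apply Real.log_le_log h2x; linarith
    have b2 : (1 + x) ^ 2 - 2 * x ^ 2 ≤ 1 := by nlinarith
    have b3 : (4 / 3 : ℝ) ≤ 2 * x / (1 + x) := by
      rw [le_div_iff₀ h1x]; linarith
    have b4 : Real.log (4 / 3) ≤ Real.log (2 * x / (1 + x)) :=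
      Real.log_le_log (by norm_num) b3
    have b5 : (9:ℝ) ≤ (1 + x) ^ 2 := by nlinarith
    have hlog43 : 0 < Real.log (4 / 3 : ℝ) := Real.log_pos (by norm_num)
    have t1 : Real.log (2 * x) * (-1) ≤ Real.log (2 * x) * (2 * x ^ 2 - (1 + x) ^ 2) :=
      mul_le_mul_of_nonneg_left (by linarith) hlog2x.le
    have t2 : Real.log (4 / 3) * 9 ≤ Real.log (2 * x / (1 + x)) * (1 + x) ^ 2 :=
      mul_le_mul b4 b5 (by norm_num) hlogpos.le
    have final : Real.log 5 < Real.log (4 / 3) * 9 := by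
      have hp : Real.log (((4:ℝ) / 3) ^ (9:ℕ)) = 9 * Real.log (4 / 3) :=
        by rw [Real.log_pow]; norm_num
      have h5 : Real.log 5 < Real.log (((4:ℝ) / 3) ^ (9:ℕ)) :=
        Real.log_lt_log (by norm_num) (by norm_num)
      push_cast at hp
      linarith
    linarith

theorem stmt_6 (r : ℝ) (hr : 1 ≤ r) :
    0 < Real.log (2 * 2 ^ r) * (2 * (2 ^ r : ℝ) ^ 2) -
        Real.log (1 + 2 ^ r) * (1 + (2 : ℝ) ^ r) ^ 2 := by
  have h2 : (2:ℝ) ≤ 2 ^ r := by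
    have := Real.rpow_le_rpow_of_exponent_le (by norm_num : (1:ℝ) ≤ 2) hr
    rwa [Real.rpow_one] at this
  exact key_aux _ h2
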